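/- Let (q_n) be defined by q_n(x) = (1/2) q_{n-1}(x/(1-x)) for 0 ≤ x ≤ 1/2 and q_n(x) = 1 − (1/2) q_{n-1}((1-x)/x) for 1/2 < x ≤ 1, starting from any probability distribution function q_0 on [0,1] with q_0(0)=0, q_0(1)=1. Then sup_{x∈[0,1]} |q_n(x) − q(x)| ≤ 2^{-n} sup_{x∈[0,1]} |q_0(x) − q(x)|, so q_n converges uniformly to Minkowski's question mark function q. -/

import Mathlib

/-- The self-similarity operator for Minkowski's question mark function. -/
noncomputable def minkT (f : ℝ → ℝ) : ℝ → ℝ := fun x =>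
  if x ≤ 1/2 then (1/2) * f (x / (1 - x)) else 1 - (1/2) * f ((1 - x) / x)

/-- Minkowski's question mark function, obtained as the (uniform) limit of the
iteration of `minkT` starting from the identity distribution function. -/
noncomputable def minkQ : ℝ → ℝ := fun x =>
  Filter.limUnder Filter.atTop (fun n => (minkT^[n] id) x)

lemma mink_mem1 {x : ℝ} (h0 : 0 ≤ x) (h2 : x ≤ 1/2) :
    x / (1 - x) ∈ Set.Icc (0:ℝ) 1 := by
  constructor
  · exact div_nonneg h0 (by linarith)
  · rw [div_le_one (by linarith)]; linarith

lemma mink_mem2 {x : ℝ} (h2 : ¬ x ≤ 1/2) (h1 : x ≤ 1) :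
    (1 - x) / x ∈ Set.Icc (0:ℝ) 1 := by
  push_neg at h2
  constructor
  · exact div_nonneg (by linarith) (by linarith)
  · rw [div_le_one (by linarith)]; linarith

lemma minkT_contract (f g : ℝ → ℝ) (x : ℝ) (hx : x ∈ Set.Icc (0:ℝ) 1) :
    ∃ y ∈ Set.Icc (0:ℝ) 1, |minkT f x - minkT g x| = (1/2) * |f y - g y| := by
  obtain ⟨hx0, hx1⟩ := hx
  unfold minkT
  by_cases hc : x ≤ 1/2
  · refine ⟨x / (1 - x), mink_mem1 hx0 hc, ?_⟩
    simp only [if_pos hc]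
    rw [show (1/2 : ℝ) * f (x / (1-x)) - (1/2) * g (x / (1-x))
        = (1/2) * (f (x / (1-x)) - g (x / (1-x))) by ring, abs_mul]
    norm_num
  · refine ⟨(1 - x) / x, mink_mem2 hc hx1, ?_⟩
    simp only [if_neg hc]
    rw [show (1 - (1/2 : ℝ) * f ((1-x)/x)) - (1 - (1/2) * g ((1-x)/x))
        = (1/2) * (g ((1-x)/x) - f ((1-x)/x)) by ring, abs_mul,
      abs_sub_comm (g ((1-x)/x))]
    norm_num

lemma minkT_iter_bound (f g : ℝ → ℝ) (D : ℝ)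
    (hD : ∀ y ∈ Set.Icc (0:ℝ) 1, |f y - g y| ≤ D) :
    ∀ n : ℕ, ∀ x ∈ Set.Icc (0:ℝ) 1,
      |(minkT^[n] f) x - (minkT^[n] g) x| ≤ (1/2) ^ n * D := by
  intro n
  induction n with
  | zero => simpa using hD
  | succ n ih =>
    intro x hx
    rw [Function.iterate_succ_apply', Function.iterate_succ_apply']
    obtain ⟨y, hy, hEq⟩ := minkT_contract (minkT^[n] f) (minkT^[n] g) x hx
    rw [hEq]
    have := ih y hy
    calc (1/2 : ℝ) * |(minkT^[n] f) y - (minkT^[n] g) y|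
        ≤ (1/2) * ((1/2) ^ n * D) := by linarith
      _ = (1/2) ^ (n+1) * D := by ring

lemma minkT_mem (f : ℝ → ℝ) (hf : ∀ y ∈ Set.Icc (0:ℝ) 1, f y ∈ Set.Icc (0:ℝ) 1) :
    ∀ x ∈ Set.Icc (0:ℝ) 1, minkT f x ∈ Set.Icc (0:ℝ) 1 := by
  intro x ⟨hx0, hx1⟩
  unfold minkT
  by_cases hc : x ≤ 1/2
  · simp only [if_pos hc]
    obtain ⟨h0, h1⟩ := hf _ (mink_mem1 hx0 hc)
    constructor <;> linarith
  · simp only [if_neg hc]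
    obtain ⟨h0, h1⟩ := hf _ (mink_mem2 hc hx1)
    constructor <;> linarith

lemma minkT_iter_mem : ∀ n : ℕ, ∀ x ∈ Set.Icc (0:ℝ) 1,
    (minkT^[n] id) x ∈ Set.Icc (0:ℝ) 1 := by
  intro n
  induction n with
  | zero => intro x hx; simpa using hx
  | succ n ih =>
    intro x hx
    rw [Function.iterate_succ_apply']
    exact minkT_mem _ ih x hx

lemma minkT_cauchy {x : ℝ} (hx : x ∈ Set.Icc (0:ℝ) 1) :
    CauchySeq (fun n => (minkT^[n] id) x) := by
  apply cauchySeq_of_le_geometric (1/2) 1 (by norm_num)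
  intro n
  rw [Real.dist_eq, Function.iterate_succ_apply]
  have hD : ∀ y ∈ Set.Icc (0:ℝ) 1, |id y - minkT id y| ≤ 1 := by
    intro y hy
    obtain ⟨h0, h1⟩ := hy
    obtain ⟨h0', h1'⟩ := minkT_mem id (fun y hy => hy) y ⟨h0, h1⟩
    rw [abs_le]; constructor <;> simp <;> linarith
  have := minkT_iter_bound id (minkT id) 1 hD n x hx
  linarith [this]

lemma minkT_tendsto {x : ℝ} (hx : x ∈ Set.Icc (0:ℝ) 1) :
    Filter.Tendsto (fun n => (minkT^[n] id) x) Filter.atTop (nhds (minkQ x)) :=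
  (minkT_cauchy hx).tendsto_limUnder

lemma minkQ_mem {x : ℝ} (hx : x ∈ Set.Icc (0:ℝ) 1) : minkQ x ∈ Set.Icc (0:ℝ) 1 := by
  constructor
  · exact ge_of_tendsto' (minkT_tendsto hx) (fun n => (minkT_iter_mem n x hx).1)
  · exact le_of_tendsto' (minkT_tendsto hx) (fun n => (minkT_iter_mem n x hx).2)

lemma minkQ_fixed : ∀ x ∈ Set.Icc (0:ℝ) 1, minkT minkQ x = minkQ x := by
  intro x hx
  obtain ⟨hx0, hx1⟩ := hx
  have hshift : Filter.Tendsto (fun n => (minkT^[n+1] id) x) Filter.atTop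
      (nhds (minkQ x)) :=
    (minkT_tendsto ⟨hx0, hx1⟩).comp (Filter.tendsto_add_atTop_nat 1)
  by_cases hc : x ≤ 1/2
  · have hy := mink_mem1 hx0 hc
    have h2 : Filter.Tendsto (fun n => (minkT^[n+1] id) x) Filter.atTop
        (nhds ((1/2) * minkQ (x / (1 - x)))) := by
      have : ∀ n : ℕ, (minkT^[n+1] id) x = (1/2) * (minkT^[n] id) (x / (1 - x)) := by
        intro n
        rw [Function.iterate_succ_apply']
        simp only [minkT, if_pos hc]
      simp only [this]
      exact (minkT_tendsto hy).const_mul _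
    have := tendsto_nhds_unique h2 hshift
    simpa only [minkT, if_pos hc] using this
  · have hy := mink_mem2 hc hx1
    have h2 : Filter.Tendsto (fun n => (minkT^[n+1] id) x) Filter.atTop
        (nhds (1 - (1/2) * minkQ ((1 - x) / x))) := by
      have : ∀ n : ℕ, (minkT^[n+1] id) x = 1 - (1/2) * (minkT^[n] id) ((1 - x) / x) := by
        intro n
        rw [Function.iterate_succ_apply']
        simp only [minkT, if_neg hc]
      simp only [this]
      exact ((minkT_tendsto hy).const_mul _).const_sub 1
    have := tendsto_nhds_unique h2 hshift
    simpa only [minkT, if_neg hc] using this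

lemma minkT_congr (f g : ℝ → ℝ) (h : ∀ y ∈ Set.Icc (0:ℝ) 1, f y = g y) :
    ∀ x ∈ Set.Icc (0:ℝ) 1, minkT f x = minkT g x := by
  intro x ⟨hx0, hx1⟩
  unfold minkT
  by_cases hc : x ≤ 1/2
  · simp only [if_pos hc, h _ (mink_mem1 hx0 hc)]
  · simp only [if_neg hc, h _ (mink_mem2 hc hx1)]

lemma minkQ_iter_fixed : ∀ n : ℕ, ∀ x ∈ Set.Icc (0:ℝ) 1,
    (minkT^[n] minkQ) x = minkQ x := by
  intro n
  induction n with
  | zero => intro x _; rfl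
  | succ n ih =>
    intro x hx
    rw [Function.iterate_succ_apply']
    rw [minkT_congr _ minkQ ih x hx]
    exact minkQ_fixed x hx

theorem minkT_iterate_tendsto_minkQ
    (q0 : ℝ → ℝ) (hmono : MonotoneOn q0 (Set.Icc (0:ℝ) 1))
    (h0 : q0 0 = 0) (h1 : q0 1 = 1) :
    (∀ n : ℕ, ∀ x ∈ Set.Icc (0:ℝ) 1,
      |(minkT^[n] q0) x - minkQ x|
        ≤ (1 / 2) ^ n * ⨆ y : Set.Icc (0:ℝ) 1, |q0 y - minkQ y|) ∧
    TendstoUniformlyOn (fun n x => (minkT^[n] q0) x) minkQ Filter.atTop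
      (Set.Icc (0:ℝ) 1) := by
  have hq0mem : ∀ y ∈ Set.Icc (0:ℝ) 1, q0 y ∈ Set.Icc (0:ℝ) 1 := by
    intro y hy
    constructor
    · rw [← h0]
      exact hmono (Set.left_mem_Icc.2 (by norm_num)) hy hy.1
    · rw [← h1]
      exact hmono hy (Set.right_mem_Icc.2 (by norm_num)) hy.2
  set S := ⨆ y : Set.Icc (0:ℝ) 1, |q0 y - minkQ y| with hSdef
  have hbdd : BddAbove (Set.range fun y : Set.Icc (0:ℝ) 1 => |q0 y - minkQ y|) := by
    refine ⟨2, ?_⟩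
    rintro _ ⟨⟨y, hy⟩, rfl⟩
    obtain ⟨a0, a1⟩ := hq0mem y hy
    obtain ⟨b0, b1⟩ := minkQ_mem hy
    rw [abs_le]; constructor <;> simp <;> linarith
  have hS : ∀ y ∈ Set.Icc (0:ℝ) 1, |q0 y - minkQ y| ≤ S := by
    intro y hy
    exact le_ciSup hbdd ⟨y, hy⟩
  have hmain : ∀ n : ℕ, ∀ x ∈ Set.Icc (0:ℝ) 1,
      |(minkT^[n] q0) x - minkQ x| ≤ (1/2) ^ n * S := by
    intro n x hx
    rw [← minkQ_iter_fixed n x hx]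
    exact minkT_iter_bound q0 minkQ S hS n x hx
  refine ⟨hmain, ?_⟩
  rw [Metric.tendstoUniformlyOn_iff]
  intro ε hε
  have htend : Filter.Tendsto (fun n : ℕ => (1/2 : ℝ) ^ n * S) Filter.atTop (nhds 0) := by
    have := tendsto_pow_atTop_nhds_zero_of_lt_one (by norm_num : (0:ℝ) ≤ 1/2)
      (by norm_num : (1/2 : ℝ) < 1)
    simpa using this.mul_const S
  filter_upwards [htend.eventually (gt_mem_nhds hε)] with n hn x hx
  rw [Real.dist_eq, abs_sub_comm]
  exact lt_of_le_of_lt (hmain n x hx) hn
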